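/- Let n, d ≥ 1, k ≥ 1, ρ > 0, and let N be a positive integer. Let X be an n×d real matrix, let Σ̂ := (1/n) XᵀX, and suppose (v_1, …, v_d) is an orthonormal basis of ℝ^d with Σ̂ = Σ_{j=1}^d λ_j v_j v_jᵀ and λ_1 ≥ ⋯ ≥ λ_d ≥ 0. Assume there exists v ∈ ℝ^d with ‖v‖₂ = 1, ‖v‖₀ ≤ k and ‖X.mulVec v‖₂ ≥ ρ·‖v‖₁. Define opt := sup { (1/n)·(‖X.mulVec v‖₂ − ρ·‖v‖₁)² : ‖v‖₂ = 1, ‖v‖₀ ≤ k, ‖X.mulVec v‖₂ ≥ ρ·‖v‖₁ }, and define ub as the supremum of t²/n over all tuples (v, t, y, η) such that ‖v‖₂ ≤ 1, ‖v‖₀ ≤ k, t ≥ 0, y ≥ ‖v‖₁, for each j ∈ {1,…,d} the vector η_j of nonnegative reals indexed by ℓ ∈ {−N,…,N} is SOS-II with Σ_ℓ η_j(ℓ) = 1 and ⟨v_j, v⟩ = Σ_ℓ (ℓ/N)·η_j(ℓ), and n·Σ_{j=1}^d λ_j·(Σ_ℓ (ℓ/N)²·η_j(ℓ)) ≥ (t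 + ρ·y)². Then opt ≤ ub ≤ opt + (1/(4N²))·Σ_{j=1}^d λ_j. -/

import Mathlib

open Matrix

/-- A vector `η` of `2N+1` nonnegative reals indexed by `ℓ ∈ {-N, …, N}` is SOS-II if
at most two of its entries are nonzero, and if two are nonzero they are consecutive. -/
def IsSOSII (N : ℕ) (η : ℤ → ℝ) : Prop :=
  (∀ ℓ ∈ Finset.Icc (-(N : ℤ)) (N : ℤ), 0 ≤ η ℓ) ∧
  ∃ ℓ₀ : ℤ, ∀ ℓ ∈ Finset.Icc (-(N : ℤ)) (N : ℤ), η ℓ ≠ 0 → ℓ = ℓ₀ ∨ ℓ = ℓ₀ + 1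

section helpers

lemma quad_id' (n d : ℕ) (X : Matrix (Fin n) (Fin d) ℝ) (v : Fin d → Fin d → ℝ)
    (lam : Fin d → ℝ)
    (hdecomp : (1 / (n : ℝ)) • (Xᵀ * X) = ∑ j, lam j • Matrix.vecMulVec (v j) (v j))
    (w : Fin d → ℝ) :
    (1 / (n:ℝ)) * ∑ i, (X.mulVec w i) ^ 2 = ∑ j, lam j * (∑ i, v j i * w i) ^ 2 := by
  have h := congrArg (fun M : Matrix (Fin d) (Fin d) ℝ => w ⬝ᵥ M *ᵥ w) hdecomp
  have hL : w ⬝ᵥ ((1 / (n:ℝ)) • (Xᵀ * X)) *ᵥ w = (1/(n:ℝ)) * ∑ i, (X.mulVec w i) ^ 2 := by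
    rw [Matrix.smul_mulVec, dotProduct_smul, ← Matrix.mulVec_mulVec,
      dotProduct_mulVec, vecMul_transpose]
    simp [dotProduct, pow_two, smul_eq_mul]
  have hsum : (∑ j, lam j • Matrix.vecMulVec (v j) (v j)) *ᵥ w
      = ∑ j, lam j • ((v j ⬝ᵥ w) • v j) := by
    ext i
    simp only [Matrix.mulVec, dotProduct, Matrix.sum_apply, Matrix.smul_apply,
      Matrix.vecMulVec_apply, smul_eq_mul, Finset.sum_mul, Finset.sum_apply, Pi.smul_apply]
    rw [Finset.sum_comm]
    refine Finset.sum_congr rfl fun j _ => ?_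
    rw [Finset.mul_sum]
    exact Finset.sum_congr rfl fun x _ => by ring
  have hR : w ⬝ᵥ (∑ j, lam j • Matrix.vecMulVec (v j) (v j)) *ᵥ w
      = ∑ j, lam j * (∑ i, v j i * w i) ^ 2 := by
    rw [hsum]
    simp only [dotProduct, Finset.sum_apply, Pi.smul_apply, smul_eq_mul, Finset.mul_sum]
    rw [Finset.sum_comm]
    refine Finset.sum_congr rfl fun j _ => ?_
    simp only [pow_two, Finset.sum_mul, Finset.mul_sum]
    refine Finset.sum_congr rfl fun i _ => ?_
    exact Finset.sum_congr rfl fun x _ => by ring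
  rw [hL, hR] at h
  exact h

lemma sum_support_two' (S : Finset ℤ) (η : ℤ → ℝ) (ℓ₀ : ℤ)
    (hsupp : ∀ ℓ ∈ S, η ℓ ≠ 0 → ℓ = ℓ₀ ∨ ℓ = ℓ₀ + 1) (g : ℤ → ℝ) :
    ∑ ℓ ∈ S, g ℓ * η ℓ =
      (if ℓ₀ ∈ S then g ℓ₀ * η ℓ₀ else 0) + (if ℓ₀ + 1 ∈ S then g (ℓ₀+1) * η (ℓ₀+1) else 0) := by
  have h1 : ∑ ℓ ∈ S, g ℓ * η ℓ =
      ∑ ℓ ∈ S, ((if ℓ = ℓ₀ then g ℓ * η ℓ else 0) + (if ℓ = ℓ₀ + 1 then g ℓ * η ℓ else 0)) := by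
    refine Finset.sum_congr rfl fun ℓ hℓ => ?_
    by_cases hη : η ℓ = 0
    · simp [hη]
    · rcases hsupp ℓ hℓ hη with h | h <;> subst h <;> simp
  rw [h1, Finset.sum_add_distrib, Finset.sum_ite_eq' S ℓ₀ (fun ℓ => g ℓ * η ℓ),
    Finset.sum_ite_eq' S (ℓ₀+1) (fun ℓ => g ℓ * η ℓ)]

lemma sosii_moments' (N : ℕ) (hN : 1 ≤ N) (η : ℤ → ℝ) (h : IsSOSII N η)
    (hsum : ∑ ℓ ∈ Finset.Icc (-(N:ℤ)) (N:ℤ), η ℓ = 1) :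
    (∑ ℓ ∈ Finset.Icc (-(N:ℤ)) (N:ℤ), ((ℓ:ℝ)/N) * η ℓ) ^ 2
      ≤ ∑ ℓ ∈ Finset.Icc (-(N:ℤ)) (N:ℤ), ((ℓ:ℝ)/N) ^ 2 * η ℓ ∧
    (∑ ℓ ∈ Finset.Icc (-(N:ℤ)) (N:ℤ), ((ℓ:ℝ)/N) ^ 2 * η ℓ)
      ≤ (∑ ℓ ∈ Finset.Icc (-(N:ℤ)) (N:ℤ), ((ℓ:ℝ)/N) * η ℓ) ^ 2 + 1 / (4 * N ^ 2) ∧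
    (∑ ℓ ∈ Finset.Icc (-(N:ℤ)) (N:ℤ), ((ℓ:ℝ)/N) ^ 2 * η ℓ) ≤ 1 := by
  obtain ⟨hpos, ℓ₀, hsupp⟩ := h
  set S := Finset.Icc (-(N:ℤ)) (N:ℤ) with hS
  have hNpos : (0:ℝ) < N := by exact_mod_cast hN
  set a : ℝ := if ℓ₀ ∈ S then η ℓ₀ else 0 with ha
  set b : ℝ := if ℓ₀ + 1 ∈ S then η (ℓ₀+1) else 0 with hb
  have ha0 : 0 ≤ a := by
    rw [ha]; split
    · exact hpos _ ‹_›
    · exact le_refl 0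
  have hb0 : 0 ≤ b := by
    rw [hb]; split
    · exact hpos _ ‹_›
    · exact le_refl 0
  have hgen : ∀ g : ℤ → ℝ, ∑ ℓ ∈ S, g ℓ * η ℓ = g ℓ₀ * a + g (ℓ₀+1) * b := by
    intro g
    rw [sum_support_two' S η ℓ₀ hsupp g, ha, hb]
    split <;> split <;> ring
  have hab : a + b = 1 := by
    have := hgen (fun _ => 1)
    simp only [one_mul] at this
    rw [← this, ← hsum]
  have hc : ∑ ℓ ∈ S, ((ℓ:ℝ)/N) * η ℓ = ((ℓ₀:ℝ)/N) * a + (((ℓ₀:ℝ)+1)/N) * b := by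
    have := hgen (fun ℓ => (ℓ:ℝ)/N)
    rw [this]; push_cast; try ring
  have hm : ∑ ℓ ∈ S, ((ℓ:ℝ)/N) ^ 2 * η ℓ = ((ℓ₀:ℝ)/N)^2 * a + (((ℓ₀:ℝ)+1)/N)^2 * b := by
    have := hgen (fun ℓ => ((ℓ:ℝ)/N)^2)
    rw [this]; push_cast; try ring
  have hb1 : b = 1 - a := by linarith
  have key : ((ℓ₀:ℝ)/N)^2 * a + (((ℓ₀:ℝ)+1)/N)^2 * b
      - (((ℓ₀:ℝ)/N) * a + (((ℓ₀:ℝ)+1)/N) * b)^2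
      = a * b * ((((ℓ₀:ℝ)+1)/N) - ((ℓ₀:ℝ)/N))^2 := by rw [hb1]; ring
  have hdiff : (((ℓ₀:ℝ)+1)/N) - ((ℓ₀:ℝ)/N) = 1/N := by field_simp; ring
  refine ⟨?_, ?_, ?_⟩
  · rw [hc, hm]
    nlinarith [key, mul_nonneg ha0 hb0, sq_nonneg ((((ℓ₀:ℝ)+1)/N) - ((ℓ₀:ℝ)/N))]
  · rw [hc, hm]
    have h14 : a * b ≤ 1/4 := by nlinarith [sq_nonneg (a - b)]
    have hN2 : (0:ℝ) < (N:ℝ)^2 := by positivity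
    have h2 : a * b * ((((ℓ₀:ℝ)+1)/N) - ((ℓ₀:ℝ)/N))^2 ≤ 1 / (4 * (N:ℝ)^2) := by
      rw [hdiff]
      calc a * b * (1/(N:ℝ))^2 ≤ (1/4) * (1/(N:ℝ))^2 :=
            mul_le_mul_of_nonneg_right h14 (sq_nonneg _)
        _ = 1 / (4 * (N:ℝ)^2) := by field_simp
    linarith [key, h2]
  · rw [hm]
    have hsq : ∀ ℓ : ℤ, ℓ ∈ S → ((ℓ:ℝ)/N)^2 ≤ 1 := by
      intro ℓ hℓ
      rw [hS, Finset.mem_Icc] at hℓ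
      rw [div_pow, div_le_one (by positivity)]
      have h1 : |(ℓ:ℝ)| ≤ N := by
        rw [abs_le]; constructor <;> [exact_mod_cast hℓ.1; exact_mod_cast hℓ.2]
      nlinarith [abs_nonneg (ℓ:ℝ), sq_abs (ℓ:ℝ)]
    have h1 : ((ℓ₀:ℝ)/N)^2 * a ≤ a := by
      rw [ha]; split
      · nlinarith [hsq ℓ₀ ‹_›, hpos ℓ₀ ‹_›]
      · simp
    have h2 : (((ℓ₀:ℝ)+1)/N)^2 * b ≤ b := by
      rw [hb]; split
      · have := hsq (ℓ₀+1) ‹_›; push_cast at this; nlinarith [hpos (ℓ₀+1) ‹_›]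
      · simp
    linarith

lemma sosii_exists' (N : ℕ) (hN : 1 ≤ N) (c : ℝ) (hc : |c| ≤ 1) :
    ∃ η : ℤ → ℝ, IsSOSII N η ∧ (∑ ℓ ∈ Finset.Icc (-(N:ℤ)) (N:ℤ), η ℓ = 1) ∧
      (∑ ℓ ∈ Finset.Icc (-(N:ℤ)) (N:ℤ), ((ℓ:ℝ)/N) * η ℓ = c) ∧
      c ^ 2 ≤ ∑ ℓ ∈ Finset.Icc (-(N:ℤ)) (N:ℤ), ((ℓ:ℝ)/N) ^ 2 * η ℓ := by
  have hNpos : (0:ℝ) < N := by exact_mod_cast hN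
  obtain ⟨hc1, hc2⟩ := abs_le.mp hc
  set ℓ₀ : ℤ := max (-(N:ℤ)) (min ((N:ℤ) - 1) ⌊(N:ℝ) * c⌋) with hℓ₀
  have hfl : (⌊(N:ℝ) * c⌋ : ℝ) ≤ (N:ℝ) * c := Int.floor_le _
  have hl1 : (ℓ₀ : ℝ) ≤ (N:ℝ) * c := by
    have h1 : (-(N:ℤ) : ℝ) ≤ (N:ℝ) * c := by push_cast; nlinarith
    have h2 : ((min ((N:ℤ) - 1) ⌊(N:ℝ) * c⌋ : ℤ) : ℝ) ≤ (N:ℝ) * c := by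
      calc ((min ((N:ℤ) - 1) ⌊(N:ℝ) * c⌋ : ℤ) : ℝ) ≤ ((⌊(N:ℝ) * c⌋ : ℤ) : ℝ) := by
            exact_mod_cast min_le_right _ _
        _ ≤ (N:ℝ) * c := hfl
    rw [hℓ₀]
    rcases max_cases (-(N:ℤ)) (min ((N:ℤ) - 1) ⌊(N:ℝ) * c⌋) with ⟨he, _⟩ | ⟨he, _⟩ <;>
      rw [he] <;> [exact_mod_cast h1; exact h2]
  have hl2 : (N:ℝ) * c ≤ (ℓ₀ : ℝ) + 1 := by
    by_cases hcase : ⌊(N:ℝ) * c⌋ ≤ (N:ℤ) - 1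
    · have : ℓ₀ = max (-(N:ℤ)) ⌊(N:ℝ) * c⌋ := by rw [hℓ₀, min_eq_right hcase]
      have h3 : (⌊(N:ℝ) * c⌋ : ℝ) ≤ (ℓ₀ : ℝ) := by
        rw [this]; exact_mod_cast le_max_right _ _
      have := Int.lt_floor_add_one ((N:ℝ) * c)
      linarith
    · push_neg at hcase
      have : ℓ₀ = (N:ℤ) - 1 := by
        rw [hℓ₀, min_eq_left (by omega)]
        exact max_eq_right (by omega)
      rw [this]; push_cast; nlinarith
  have hlb : -(N:ℤ) ≤ ℓ₀ := le_max_left _ _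
  have hub : ℓ₀ ≤ (N:ℤ) - 1 := by
    rw [hℓ₀]
    refine max_le (by omega) (min_le_left _ _)
  set θ : ℝ := (N:ℝ) * c - (ℓ₀ : ℝ) with hθ
  have hθ0 : 0 ≤ θ := by rw [hθ]; linarith
  have hθ1 : θ ≤ 1 := by rw [hθ]; linarith
  clear hℓ₀
  clear_value θ ℓ₀
  set η : ℤ → ℝ := fun ℓ => if ℓ = ℓ₀ then 1 - θ else if ℓ = ℓ₀ + 1 then θ else 0 with hη
  have hmem0 : ℓ₀ ∈ Finset.Icc (-(N:ℤ)) (N:ℤ) := Finset.mem_Icc.mpr ⟨hlb, by omega⟩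
  have hmem1 : ℓ₀ + 1 ∈ Finset.Icc (-(N:ℤ)) (N:ℤ) := Finset.mem_Icc.mpr ⟨by omega, by omega⟩
  have hne : ℓ₀ ≠ ℓ₀ + 1 := by omega
  have hval0 : η ℓ₀ = 1 - θ := by rw [hη]; simp
  have hval1 : η (ℓ₀ + 1) = θ := by rw [hη]; simp [hne.symm]
  have hsupp : ∀ ℓ ∈ Finset.Icc (-(N:ℤ)) (N:ℤ), η ℓ ≠ 0 → ℓ = ℓ₀ ∨ ℓ = ℓ₀ + 1 := by
    intro ℓ _ hℓ
    rw [hη] at hℓ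
    by_cases h1 : ℓ = ℓ₀
    · exact Or.inl h1
    by_cases h2 : ℓ = ℓ₀ + 1
    · exact Or.inr h2
    simp [h1, h2] at hℓ
  have hgen : ∀ g : ℤ → ℝ, ∑ ℓ ∈ Finset.Icc (-(N:ℤ)) (N:ℤ), g ℓ * η ℓ
      = g ℓ₀ * (1 - θ) + g (ℓ₀ + 1) * θ := by
    intro g
    rw [sum_support_two' _ η ℓ₀ hsupp g, if_pos hmem0, if_pos hmem1, hval0, hval1]
  refine ⟨η, ⟨?_, ℓ₀, hsupp⟩, ?_, ?_, ?_⟩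
  · intro ℓ _
    rw [hη]
    dsimp only
    split
    · linarith
    split
    · linarith
    · exact le_refl 0
  · have := hgen (fun _ => 1)
    simpa using this
  · have := hgen (fun ℓ => (ℓ:ℝ)/N)
    rw [this, hθ]
    push_cast
    field_simp
    ring
  · have := hgen (fun ℓ => ((ℓ:ℝ)/N)^2)
    rw [this]
    have hceq : c = ((ℓ₀:ℝ) + θ) / N := by rw [hθ]; field_simp; ring
    rw [hceq]
    have h4 : (0:ℝ) < (N:ℝ)^2 := by positivity
    have hpoly : ((ℓ₀:ℝ)+θ)^2 ≤ (ℓ₀:ℝ)^2*(1-θ) + ((ℓ₀:ℝ)+1)^2*θ := by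
      nlinarith [mul_nonneg hθ0 (sub_nonneg.mpr hθ1)]
    calc (((ℓ₀:ℝ)+θ)/N)^2 = ((ℓ₀:ℝ)+θ)^2 / (N:ℝ)^2 := by rw [div_pow]
      _ ≤ ((ℓ₀:ℝ)^2*(1-θ) + ((ℓ₀:ℝ)+1)^2*θ) / (N:ℝ)^2 := by gcongr
      _ = ((ℓ₀:ℝ)/N)^2*(1-θ) + ((((ℓ₀:ℤ)+1 : ℤ):ℝ)/N)^2*θ := by push_cast; field_simp; try ring

lemma sqrt_sum_sq_smul {n : ℕ} (s : ℝ) (hs : 0 ≤ s) (f : Fin n → ℝ) :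
    Real.sqrt (∑ i, (s * f i)^2) = s * Real.sqrt (∑ i, f i ^ 2) := by
  have : ∑ i, (s * f i)^2 = s^2 * ∑ i, f i ^ 2 := by
    rw [Finset.mul_sum]
    exact Finset.sum_congr rfl fun i _ => by ring
  rw [this, Real.sqrt_mul (sq_nonneg s), Real.sqrt_sq hs]

lemma aux_sq_add {t a : ℝ} (ht : 0 ≤ t) (ha : 0 ≤ a) : t^2 ≤ (t+a)^2 := by nlinarith

lemma aux_sqrt_split {A C : ℝ} (hA : 0 ≤ A) (hC : 0 ≤ C) :
    A^2 + C ≤ (A + Real.sqrt C)^2 := by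
  nlinarith [Real.sq_sqrt hC, Real.sqrt_nonneg C]

lemma aux_scale {x c : ℝ} (hx : 0 ≤ x) (hc : 1 ≤ c) : x^2 ≤ (c*x)^2 := by
  have h1 : 1 ≤ c^2 := by nlinarith
  calc x^2 = 1 * x^2 := (one_mul _).symm
    _ ≤ c^2 * x^2 := mul_le_mul_of_nonneg_right h1 (sq_nonneg x)
    _ = (c*x)^2 := by ring

lemma aux_key {t u A s0 C : ℝ} (ht0 : 0 ≤ t) (hu0 : 0 ≤ u) (huA : u ≤ A) (hAs : A ≤ s0)
    (hsq : s0^2 = A^2 + C) (h1 : t ≤ s0 - u) : t^2 ≤ (A - u)^2 + C := by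
  nlinarith [mul_nonneg (sub_nonneg.mpr h1) (show (0:ℝ) ≤ s0 - u + t by linarith)]

lemma aux_sqle {t C : ℝ} (ht : t ≤ Real.sqrt C) (ht0 : 0 ≤ t) (hC : 0 ≤ C) : t^2 ≤ C := by
  nlinarith [Real.sq_sqrt hC, Real.sqrt_nonneg C]

end helpers

set_option maxHeartbeats 2000000 in
theorem stmt8 (n d k N : ℕ) (hn : 1 ≤ n) (hd : 1 ≤ d) (hk : 1 ≤ k) (hN : 1 ≤ N)
    (ρ : ℝ) (hρ : 0 < ρ)
    (X : Matrix (Fin n) (Fin d) ℝ) (v : Fin d → Fin d → ℝ) (lam : Fin d → ℝ)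
    (horth : ∀ j j' : Fin d, (∑ i, v j i * v j' i) = if j = j' then 1 else 0)
    (hmono : ∀ j j' : Fin d, j ≤ j' → lam j' ≤ lam j)
    (hnonneg : ∀ j, 0 ≤ lam j)
    (hdecomp : (1 / (n : ℝ)) • (Xᵀ * X) = ∑ j, lam j • Matrix.vecMulVec (v j) (v j))
    (hfeas : ∃ w : Fin d → ℝ, Real.sqrt (∑ i, w i ^ 2) = 1 ∧ {i | w i ≠ 0}.ncard ≤ k ∧
        ρ * ∑ j, |w j| ≤ Real.sqrt (∑ i, (X.mulVec w i) ^ 2))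
    (opt ub : ℝ)
    (hopt : opt = sSup {r : ℝ | ∃ w : Fin d → ℝ,
        Real.sqrt (∑ i, w i ^ 2) = 1 ∧ {i | w i ≠ 0}.ncard ≤ k ∧
        ρ * ∑ j, |w j| ≤ Real.sqrt (∑ i, (X.mulVec w i) ^ 2) ∧
        r = (1 / n) * (Real.sqrt (∑ i, (X.mulVec w i) ^ 2) - ρ * ∑ j, |w j|) ^ 2})
    (hub : ub = sSup {r : ℝ | ∃ (w : Fin d → ℝ) (t y : ℝ) (η : Fin d → ℤ → ℝ),
        Real.sqrt (∑ i, w i ^ 2) ≤ 1 ∧ {i | w i ≠ 0}.ncard ≤ k ∧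
        0 ≤ t ∧ (∑ j, |w j|) ≤ y ∧
        (∀ j, IsSOSII N (η j)) ∧
        (∀ j, ∑ ℓ ∈ Finset.Icc (-(N : ℤ)) (N : ℤ), η j ℓ = 1) ∧
        (∀ j, (∑ i, v j i * w i) =
          ∑ ℓ ∈ Finset.Icc (-(N : ℤ)) (N : ℤ), ((ℓ : ℝ) / N) * η j ℓ) ∧
        (t + ρ * y) ^ 2 ≤
          n * ∑ j, lam j * ∑ ℓ ∈ Finset.Icc (-(N : ℤ)) (N : ℤ), ((ℓ : ℝ) / N) ^ 2 * η j ℓ ∧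
        r = t ^ 2 / n}) :
    opt ≤ ub ∧ ub ≤ opt + (1 / (4 * N ^ 2)) * ∑ j, lam j := by
  have hn' : (0:ℝ) < n := by exact_mod_cast hn
  have hNpos : (0:ℝ) < N := by exact_mod_cast hN
  subst hopt
  subst hub
  set S1 := {r : ℝ | ∃ w : Fin d → ℝ,
        Real.sqrt (∑ i, w i ^ 2) = 1 ∧ {i | w i ≠ 0}.ncard ≤ k ∧
        ρ * ∑ j, |w j| ≤ Real.sqrt (∑ i, (X.mulVec w i) ^ 2) ∧
        r = (1 / n) * (Real.sqrt (∑ i, (X.mulVec w i) ^ 2) - ρ * ∑ j, |w j|) ^ 2} with hS1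
  set S2 := {r : ℝ | ∃ (w : Fin d → ℝ) (t y : ℝ) (η : Fin d → ℤ → ℝ),
        Real.sqrt (∑ i, w i ^ 2) ≤ 1 ∧ {i | w i ≠ 0}.ncard ≤ k ∧
        0 ≤ t ∧ (∑ j, |w j|) ≤ y ∧
        (∀ j, IsSOSII N (η j)) ∧
        (∀ j, ∑ ℓ ∈ Finset.Icc (-(N : ℤ)) (N : ℤ), η j ℓ = 1) ∧
        (∀ j, (∑ i, v j i * w i) =
          ∑ ℓ ∈ Finset.Icc (-(N : ℤ)) (N : ℤ), ((ℓ : ℝ) / N) * η j ℓ) ∧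
        (t + ρ * y) ^ 2 ≤
          n * ∑ j, lam j * ∑ ℓ ∈ Finset.Icc (-(N : ℤ)) (N : ℤ), ((ℓ : ℝ) / N) ^ 2 * η j ℓ ∧
        r = t ^ 2 / n} with hS2
  -- S1 ⊆ S2
  have hsub : S1 ⊆ S2 := by
    rintro r ⟨w, hw2, hw0, hwf, hrval⟩
    have hw2' : ∑ i, w i ^ 2 = 1 := Real.sqrt_eq_one.mp hw2
    have hcs : ∀ j, |∑ i, v j i * w i| ≤ 1 := by
      intro j
      refine (sq_le_one_iff_abs_le_one _).mp ?_
      have h1 : ∑ i, v j i ^ 2 = 1 := by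
        have h := horth j j
        simp only [if_pos rfl] at h
        calc ∑ i, v j i ^ 2 = ∑ i, v j i * v j i :=
              Finset.sum_congr rfl fun i _ => sq (v j i) ▸ (pow_two (v j i))
          _ = 1 := h
      calc (∑ i, v j i * w i)^2 ≤ (∑ i, v j i ^ 2) * ∑ i, w i ^ 2 :=
            Finset.sum_mul_sq_le_sq_mul_sq _ _ _
        _ = 1 := by rw [h1, hw2']; norm_num
    choose η hη1 hη2 hη3 hη4 using fun j => sosii_exists' N hN _ (hcs j)
    refine ⟨w, Real.sqrt (∑ i, (X.mulVec w i) ^ 2) - ρ * ∑ j, |w j|, ∑ j, |w j|, η,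
      le_of_eq hw2, hw0, sub_nonneg.mpr hwf, le_refl _, hη1, hη2,
      fun j => (hη3 j).symm, ?_, ?_⟩
    · have e : Real.sqrt (∑ i, (X.mulVec w i) ^ 2) - ρ * ∑ j, |w j| + ρ * ∑ j, |w j|
          = Real.sqrt (∑ i, (X.mulVec w i) ^ 2) := by ring
      rw [e]
      have hA2 : (Real.sqrt (∑ i, (X.mulVec w i) ^ 2))^2 = ∑ i, (X.mulVec w i)^2 :=
        Real.sq_sqrt (Finset.sum_nonneg fun i _ => sq_nonneg _)
      have hqid := quad_id' n d X v lam hdecomp w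
      have hAc : (Real.sqrt (∑ i, (X.mulVec w i) ^ 2))^2
          = (n:ℝ) * ∑ j, lam j * (∑ i, v j i * w i)^2 := by
        rw [hA2]
        field_simp at hqid
        linarith [hqid]
      rw [hAc]
      refine mul_le_mul_of_nonneg_left (Finset.sum_le_sum fun j _ => ?_) hn'.le
      exact mul_le_mul_of_nonneg_left (hη4 j) (hnonneg j)
    · rw [hrval]; ring
  -- bounded above
  have hbdd2 : BddAbove S2 := by
    refine ⟨∑ j, lam j, ?_⟩
    rintro r ⟨w, t, y, η, hw2, hw0, ht0, hy, hsos, hsum1, hmom, hquad, hrval⟩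
    have hm1 : ∀ j, (∑ ℓ ∈ Finset.Icc (-(N:ℤ)) (N:ℤ), ((ℓ:ℝ)/N) ^ 2 * η j ℓ) ≤ 1 :=
      fun j => (sosii_moments' N hN (η j) (hsos j) (hsum1 j)).2.2
    have h1 : (n:ℝ) * ∑ j, lam j * (∑ ℓ ∈ Finset.Icc (-(N:ℤ)) (N:ℤ), ((ℓ:ℝ)/N) ^ 2 * η j ℓ)
        ≤ n * ∑ j, lam j := by
      refine mul_le_mul_of_nonneg_left (Finset.sum_le_sum fun j _ => ?_) hn'.le
      calc lam j * _ ≤ lam j * 1 := mul_le_mul_of_nonneg_left (hm1 j) (hnonneg j)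
        _ = lam j := mul_one _
    have hy0 : (0:ℝ) ≤ y := le_trans (Finset.sum_nonneg fun j _ => abs_nonneg _) hy
    have ht2 : t^2 ≤ (t + ρ*y)^2 := aux_sq_add ht0 (mul_nonneg hρ.le hy0)
    rw [hrval, div_le_iff₀ hn']
    calc t^2 ≤ (n:ℝ) * ∑ j, lam j := le_trans ht2 (le_trans hquad h1)
      _ = (∑ j, lam j) * n := mul_comm _ _
  have hne1 : S1.Nonempty := by
    obtain ⟨w, h1, h2, h3⟩ := hfeas
    exact ⟨_, w, h1, h2, h3, rfl⟩
  have hbdd1 : BddAbove S1 := hbdd2.mono hsub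
  have hopt0 : 0 ≤ sSup S1 := by
    obtain ⟨w, h1, h2, h3⟩ := hfeas
    have hmem : (1/(n:ℝ)) * (Real.sqrt (∑ i, (X.mulVec w i) ^ 2) - ρ * ∑ j, |w j|)^2 ∈ S1 :=
      ⟨w, h1, h2, h3, rfl⟩
    have hle := le_csSup hbdd1 hmem
    have hpos : (0:ℝ) ≤ (1/(n:ℝ)) * (Real.sqrt (∑ i, (X.mulVec w i) ^ 2) - ρ * ∑ j, |w j|)^2 := by
      positivity
    linarith
  refine ⟨csSup_le_csSup hbdd2 hne1 hsub, ?_⟩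
  refine csSup_le (hne1.mono hsub) ?_
  rintro r ⟨w, t, y, η, hw2, hw0, ht0, hy, hsos, hsum1, hmom, hquad, hrval⟩
  have hs0 : (0:ℝ) ≤ ∑ i, (X.mulVec w i)^2 := Finset.sum_nonneg fun i _ => sq_nonneg _
  set A := Real.sqrt (∑ i, (X.mulVec w i)^2) with hAdef
  have hA0 : 0 ≤ A := Real.sqrt_nonneg _
  have hA2 : A^2 = ∑ i, (X.mulVec w i)^2 := Real.sq_sqrt hs0
  set u := ρ * ∑ j, |w j| with hudef
  have hu0 : 0 ≤ u := mul_nonneg hρ.le (Finset.sum_nonneg fun j _ => abs_nonneg _)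
  set C := (n:ℝ) * ((1/(4*(N:ℝ)^2)) * ∑ j, lam j) with hCdef
  have hlam0 : 0 ≤ ∑ j, lam j := Finset.sum_nonneg fun j _ => hnonneg j
  have hC0 : 0 ≤ C := by
    rw [hCdef]
    have : (0:ℝ) ≤ (1/(4*(N:ℝ)^2)) := by positivity
    positivity
  have hqid := quad_id' n d X v lam hdecomp w
  have hAc : (n:ℝ) * ∑ j, lam j * (∑ i, v j i * w i)^2 = A^2 := by
    rw [hA2]
    field_simp at hqid
    linarith [hqid]
  have hmU : ∀ j, (∑ ℓ ∈ Finset.Icc (-(N:ℤ)) (N:ℤ), ((ℓ:ℝ)/N) ^ 2 * η j ℓ)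
      ≤ (∑ i, v j i * w i)^2 + 1/(4*(N:ℝ)^2) := by
    intro j
    have h := (sosii_moments' N hN (η j) (hsos j) (hsum1 j)).2.1
    rw [← hmom j] at h
    exact h
  have hsum_le : (n:ℝ) * ∑ j, lam j * (∑ ℓ ∈ Finset.Icc (-(N:ℤ)) (N:ℤ), ((ℓ:ℝ)/N) ^ 2 * η j ℓ)
      ≤ A^2 + C := by
    have h1 : ∑ j, lam j * (∑ ℓ ∈ Finset.Icc (-(N:ℤ)) (N:ℤ), ((ℓ:ℝ)/N) ^ 2 * η j ℓ)
        ≤ ∑ j, (lam j * (∑ i, v j i * w i)^2 + lam j * (1/(4*(N:ℝ)^2))) := by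
      refine Finset.sum_le_sum fun j _ => ?_
      exact (mul_le_mul_of_nonneg_left (hmU j) (hnonneg j)).trans_eq (by ring)
    rw [Finset.sum_add_distrib] at h1
    have h2 : ∑ j, lam j * (1/(4*(N:ℝ)^2)) = (1/(4*(N:ℝ)^2)) * ∑ j, lam j := by
      rw [← Finset.sum_mul, mul_comm]
    rw [h2] at h1
    calc (n:ℝ) * ∑ j, lam j * (∑ ℓ ∈ Finset.Icc (-(N:ℤ)) (N:ℤ), ((ℓ:ℝ)/N) ^ 2 * η j ℓ)
        ≤ n * (∑ j, lam j * (∑ i, v j i * w i)^2 + (1/(4*(N:ℝ)^2)) * ∑ j, lam j) :=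
          mul_le_mul_of_nonneg_left h1 hn'.le
      _ = (n:ℝ) * ∑ j, lam j * (∑ i, v j i * w i)^2 + C := by rw [hCdef]; ring
      _ = A^2 + C := by rw [hAc]
  have hy0 : (0:ℝ) ≤ y := le_trans (Finset.sum_nonneg fun j _ => abs_nonneg _) hy
  have hty : t + u ≤ Real.sqrt (A^2 + C) := by
    have h1 : t + u ≤ t + ρ * y := by
      have := mul_le_mul_of_nonneg_left hy hρ.le
      rw [hudef]; linarith
    have h4 : (0:ℝ) ≤ t + ρ*y := by positivity
    have h2 : (t + ρ*y) ≤ Real.sqrt (A^2+C) := by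
      calc t+ρ*y = Real.sqrt ((t+ρ*y)^2) := (Real.sqrt_sq h4).symm
        _ ≤ _ := Real.sqrt_le_sqrt (le_trans hquad hsum_le)
    linarith
  have hsqC : Real.sqrt (A^2+C) ≤ A + Real.sqrt C := by
    have h1 : A^2 + C ≤ (A + Real.sqrt C)^2 := aux_sqrt_split hA0 hC0
    calc Real.sqrt (A^2+C) ≤ Real.sqrt ((A+Real.sqrt C)^2) := Real.sqrt_le_sqrt h1
      _ = A + Real.sqrt C := Real.sqrt_sq (by positivity)
  have hAle : A ≤ Real.sqrt (A^2+C) := by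
    calc A = Real.sqrt (A^2) := (Real.sqrt_sq hA0).symm
      _ ≤ _ := Real.sqrt_le_sqrt (by linarith)
  have hCN : C / n = (1/(4*(N:ℝ)^2)) * ∑ j, lam j := by
    rw [hCdef]; field_simp
  by_cases hcase : u ≤ A ∧ w ≠ 0
  · obtain ⟨huA, hwne⟩ := hcase
    set s := Real.sqrt (∑ i, w i ^ 2) with hsdef
    have hspos : 0 < s := by
      obtain ⟨i0, hi0⟩ := Function.ne_iff.mp hwne
      have hp : 0 < ∑ i, w i ^2 :=
        Finset.sum_pos' (fun i _ => sq_nonneg _) ⟨i0, Finset.mem_univ _, lt_of_le_of_ne (sq_nonneg _) (Ne.symm (pow_ne_zero 2 hi0))⟩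
      exact Real.sqrt_pos.mpr hp
    have hsinv0 : (0:ℝ) ≤ s⁻¹ := by positivity
    have hA' : Real.sqrt (∑ i, (X.mulVec (s⁻¹ • w) i)^2) = s⁻¹ * A := by
      rw [Matrix.mulVec_smul]
      have := sqrt_sum_sq_smul s⁻¹ hsinv0 (X.mulVec w)
      simpa using this
    have hl1' : ∑ j, |(s⁻¹ • w) j| = s⁻¹ * ∑ j, |w j| := by
      simp [abs_mul, abs_of_nonneg hsinv0, Finset.mul_sum]
    have hnorm' : Real.sqrt (∑ i, ((s⁻¹ • w) i)^2) = 1 := by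
      have h := sqrt_sum_sq_smul s⁻¹ hsinv0 w
      simp only [Pi.smul_apply, smul_eq_mul]
      rw [h, ← hsdef, inv_mul_cancel₀ hspos.ne']
    have hcard' : {i | (s⁻¹ • w) i ≠ 0}.ncard ≤ k := by
      have he : {i | (s⁻¹ • w) i ≠ 0} = {i | w i ≠ 0} := by
        ext i
        simp only [Pi.smul_apply, smul_eq_mul, Set.mem_setOf_eq, ne_eq, mul_eq_zero, not_or]
        constructor
        · intro h; exact h.2
        · intro h; exact ⟨inv_ne_zero hspos.ne', h⟩
      rw [he]; exact hw0
    have hfeas' : ρ * ∑ j, |(s⁻¹ • w) j| ≤ Real.sqrt (∑ i, (X.mulVec (s⁻¹ • w) i)^2) := by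
      rw [hl1', hA']
      calc ρ * (s⁻¹ * ∑ j, |w j|) = s⁻¹ * u := by rw [hudef]; ring
        _ ≤ s⁻¹ * A := mul_le_mul_of_nonneg_left huA hsinv0
    have hmem : (1/(n:ℝ)) * (Real.sqrt (∑ i, (X.mulVec (s⁻¹ • w) i)^2)
        - ρ * ∑ j, |(s⁻¹ • w) j|)^2 ∈ S1 := ⟨s⁻¹ • w, hnorm', hcard', hfeas', rfl⟩
    have hle_opt := le_csSup hbdd1 hmem
    have hval : (1/(n:ℝ)) * (Real.sqrt (∑ i, (X.mulVec (s⁻¹ • w) i)^2)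
        - ρ * ∑ j, |(s⁻¹ • w) j|)^2 = (1/(n:ℝ))*(s⁻¹ * (A - u))^2 := by
      rw [hA', hl1', hudef]; ring
    rw [hval] at hle_opt
    have hsinv1 : 1 ≤ s⁻¹ := by
      rw [le_inv_comm₀ (by norm_num) hspos]
      simpa using hw2
    have hAu0 : 0 ≤ A - u := sub_nonneg.mpr huA
    have hsc : (A - u)^2 ≤ (s⁻¹*(A-u))^2 := aux_scale hAu0 hsinv1
    have hopt_ge : (1/(n:ℝ))*(A-u)^2 ≤ sSup S1 := by
      have h := mul_le_mul_of_nonneg_left hsc (by positivity : (0:ℝ) ≤ 1/(n:ℝ))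
      linarith
    have ht2 : t^2 ≤ (A-u)^2 + C := by
      have h1 : t ≤ Real.sqrt (A^2+C) - u := by linarith [hty]
      have h2 : (Real.sqrt (A^2+C))^2 = A^2 + C := Real.sq_sqrt (by positivity)
      exact aux_key ht0 hu0 huA hAle h2 h1
    rw [hrval]
    calc t^2/n ≤ ((A-u)^2 + C)/n := by gcongr
      _ = (1/(n:ℝ))*(A-u)^2 + C/n := by ring
      _ ≤ sSup S1 + (1 / (4 * (N:ℝ) ^ 2)) * ∑ j, lam j := by
          rw [hCN]; exact add_le_add_left hopt_ge _
  · have htC : t ≤ Real.sqrt C := by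
      rcases not_and_or.mp hcase with h | h
      · push_neg at h
        linarith [hty, hsqC]
      · rw [not_not] at h
        have hAz : A = 0 := by
          rw [hAdef, h]
          simp
        have huz : u = 0 := by rw [hudef, h]; simp
        have he : Real.sqrt (A^2 + C) = Real.sqrt C := by rw [hAz]; norm_num
        rw [he, huz] at hty
        linarith
    have ht2 : t^2 ≤ C := aux_sqle htC ht0 hC0
    rw [hrval]
    calc t^2/n ≤ C/n := by gcongr
      _ = (1/(4*(N:ℝ)^2)) * ∑ j, lam j := hCN
      _ ≤ sSup S1 + (1/(4*(N:ℝ)^2)) * ∑ j, lam j := by linarith [hopt0]
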